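/- arXiv:1606.05784 — 2 statements merged into one kernel-verified Lean document; each statement's English description precedes it below -/
import Mathlib

section
/- Let α > 0 be real and let ν be a real number with ν > max(0, ln(α·λ)·F*). Then the probability that proportional selection returns an index i with F_i = F_0 is at least 1/(1 + 1/α) = α/(α + 1). -/
open scoped BigOperators

/-- Proposition 2: proportional selection with the scaled fitness `f = F^ν`.
If `ν > max(0, ln(α·λ)·F*)`, then the probability
`(∑_{i : F_i = F_0} F_i^ν) / (∑_j F_j^ν)` that the selected index attains the
maximal objective value `F_0` is at least `1/(1 + 1/α)`. -/
theorem stmt_6 (lam : ℕ) (hlam : 0 < lam) (F : Fin lam → ℕ)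
    (Fstar : ℕ) (hFstar : 1 ≤ Fstar) (hFle : ∀ i, F i ≤ Fstar)
    (F0 : ℕ) (hF0 : F0 = Finset.univ.sup F) (hF01 : 1 ≤ F0)
    (α ν : ℝ) (hα : 0 < α)
    (hν : max 0 (Real.log (α * lam) * Fstar) < ν) :
    1 / (1 + 1 / α) ≤
      (∑ i ∈ Finset.univ.filter fun i => F i = F0, (F i : ℝ) ^ ν) /
        ∑ j, (F j : ℝ) ^ ν := by
  have hν0 : (0:ℝ) < ν := lt_of_le_of_lt (le_max_left _ _) hν
  have hNE : Nonempty (Fin lam) := ⟨⟨0, hlam⟩⟩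
  set A := ∑ i ∈ Finset.univ.filter fun i => F i = F0, (F i : ℝ) ^ ν with hA
  set C := ∑ i ∈ Finset.univ.filter fun i => ¬ F i = F0, (F i : ℝ) ^ ν with hC
  have hsplit : (∑ j, (F j:ℝ)^ν) = A + C :=
    (Finset.sum_filter_add_sum_filter_not _ _ _).symm
  have hCnn : 0 ≤ C :=
    Finset.sum_nonneg fun i _ => Real.rpow_nonneg (by positivity) _
  have hF0pos : (0:ℝ) < (F0:ℝ) := by exact_mod_cast hF01
  have hF0ν : (0:ℝ) < (F0:ℝ)^ν := Real.rpow_pos_of_pos hF0pos _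
  -- A is at least F0^ν
  have hAge : (F0:ℝ)^ν ≤ A := by
    obtain ⟨i0, -, hi0⟩ := Finset.exists_mem_eq_sup Finset.univ
      Finset.univ_nonempty F
    have hmem : i0 ∈ Finset.univ.filter fun i => F i = F0 := by
      simp [hF0, hi0]
    have := Finset.single_le_sum
      (f := fun i => (F i:ℝ)^ν)
      (fun i _ => Real.rpow_nonneg (by positivity) _) hmem
    have hFi0 : F i0 = F0 := by rw [hF0, hi0]
    simpa [hFi0] using this
  have hApos : (0:ℝ) < A := lt_of_lt_of_le hF0ν hAge
  -- C bounded by lam * (F0-1)^ν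
  have hCle : C ≤ (lam:ℝ) * ((F0:ℝ) - 1)^ν := by
    have h1 : C ≤ ∑ _i ∈ Finset.univ.filter fun i => ¬ F i = F0,
        ((F0:ℝ) - 1)^ν := by
      apply Finset.sum_le_sum
      intro i hi
      have hiF : ¬ F i = F0 := (Finset.mem_filter.mp hi).2
      have hle : F i ≤ F0 := hF0 ▸ Finset.le_sup (Finset.mem_univ i)
      have hlt : F i < F0 := lt_of_le_of_ne hle hiF
      have hr : (F i:ℝ) ≤ (F0:ℝ) - 1 := by
        have : (F i : ℝ) + 1 ≤ (F0:ℝ) := by exact_mod_cast hlt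
        linarith
      have h0 : (0:ℝ) ≤ ((F0:ℝ) - 1) := by
        have : (1:ℝ) ≤ (F0:ℝ) := by exact_mod_cast hF01
        linarith
      exact Real.rpow_le_rpow (by positivity) hr hν0.le
    refine h1.trans ?_
    rw [Finset.sum_const, nsmul_eq_mul]
    apply mul_le_mul_of_nonneg_right _ (Real.rpow_nonneg (by
      have : (1:ℝ) ≤ (F0:ℝ) := by exact_mod_cast hF01
      linarith) _)
    have : (Finset.univ.filter fun i => ¬ F i = F0).card ≤ lam := by
      calc (Finset.univ.filter fun i => ¬ F i = F0).card
          ≤ (Finset.univ : Finset (Fin lam)).card := Finset.card_filter_le _ _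
        _ = lam := by simp
    exact_mod_cast this
  -- key bound : lam * (F0-1)^ν ≤ F0^ν / α
  have hkey : (lam:ℝ) * ((F0:ℝ) - 1)^ν ≤ (F0:ℝ)^ν / α := by
    rcases eq_or_lt_of_le hF01 with h1 | h2
    · -- F0 = 1
      have : ((F0:ℝ) - 1) = 0 := by
        have : (F0:ℝ) = 1 := by exact_mod_cast h1.symm
        linarith
      rw [this, Real.zero_rpow (ne_of_gt hν0), mul_zero]
      positivity
    · -- F0 ≥ 2
      set x : ℝ := (F0:ℝ) with hx
      have hx2 : (2:ℝ) ≤ x := by rw [hx]; exact_mod_cast h2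
      have hxm1 : (0:ℝ) < x - 1 := by linarith
      have hxpos : (0:ℝ) < x := by linarith
      have hlamR : (0:ℝ) < (lam:ℝ) := by exact_mod_cast hlam
      -- log(x-1) - log x ≤ -1/x
      have hlog1 : Real.log ((x-1)/x) ≤ (x-1)/x - 1 :=
        Real.log_le_sub_one_of_pos (by positivity)
      have hlog2 : Real.log (x-1) - Real.log x ≤ -(1/x) := by
        rw [Real.log_div (ne_of_gt hxm1) (ne_of_gt hxpos)] at hlog1
        have : (x-1)/x - 1 = -(1/x) := by field_simp; ring
        linarith [this ▸ hlog1]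
      have hgap : 1/x ≤ Real.log x - Real.log (x-1) := by linarith
      -- log(α λ) ≤ ν (log x - log(x-1))
      have hmain : Real.log (α * lam) ≤ ν * (Real.log x - Real.log (x-1)) := by
        rcases le_or_gt (Real.log (α * lam)) 0 with h | h
        · have : 0 < ν * (1/x) := by positivity
          nlinarith [mul_le_mul_of_nonneg_left hgap hν0.le]
        · have hF0star : x ≤ (Fstar:ℝ) := by
            have h' : F0 ≤ Fstar := hF0 ▸ Finset.sup_le fun i _ => hFle i
            rw [hx]
            exact_mod_cast h'
          have hνgt : Real.log (α * lam) * (Fstar:ℝ) < ν :=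
            lt_of_le_of_lt (le_max_right _ _) hν
          have h1 : Real.log (α * lam) * x ≤ ν := by
            nlinarith
          -- log(αλ) ≤ ν / x ≤ ν (log x - log(x-1))
          have h2 : Real.log (α * lam) ≤ ν * (1/x) := by
            rw [mul_one_div]
            exact (le_div_iff₀ hxpos).mpr h1
          calc Real.log (α * lam) ≤ ν * (1/x) := h2
            _ ≤ ν * (Real.log x - Real.log (x-1)) :=
              mul_le_mul_of_nonneg_left hgap hν0.le
      -- exponentiate
      have hexp : α * ((lam:ℝ) * (x-1)^ν) ≤ x^ν := by
        have hL : (0:ℝ) < α * ((lam:ℝ) * (x-1)^ν) := by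
          have := Real.rpow_pos_of_pos hxm1 ν
          positivity
        rw [← Real.log_le_log_iff hL (Real.rpow_pos_of_pos hxpos ν)]
        rw [Real.log_mul (ne_of_gt hα) (by positivity),
            Real.log_mul (ne_of_gt hlamR) (ne_of_gt (Real.rpow_pos_of_pos hxm1 ν)),
            Real.log_rpow hxm1, Real.log_rpow hxpos]
        have : Real.log (α * lam) = Real.log α + Real.log lam :=
          Real.log_mul (ne_of_gt hα) (ne_of_gt hlamR)
        nlinarith [hmain]
      rw [le_div_iff₀ hα]
      calc (lam:ℝ) * (x-1)^ν * α = α * ((lam:ℝ) * (x-1)^ν) := by ring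
        _ ≤ x^ν := hexp
  -- conclude
  have hC' : C ≤ A / α := by
    calc C ≤ (lam:ℝ) * ((F0:ℝ) - 1)^ν := hCle
      _ ≤ (F0:ℝ)^ν / α := hkey
      _ ≤ A / α := by gcongr
  rw [hsplit, div_le_div_iff₀ (by positivity) (by linarith)]
  have hdiv : A / α = A * (1/α) := by ring
  rw [hdiv] at hC'
  linarith [hC']
end

section
/- Let 1 ≤ K ≤ n/2 and p_m = K/n. Then for all x, y ∈ {0,1}^n with Hamming distance d(x,y) ≤ K, the bitwise mutation operator satisfies Pr(Mut*(y) = x) ≥ (K/(e·n))^K. Equivalently, (K/n)^d · (1 − K/n)^{n−d} ≥ (K/(e·n))^K for every integer d with 0 ≤ d ≤ K. -/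
lemma stmt_9_aux (n K : ℕ) (hK : 1 ≤ K) (hKn : 2 * K ≤ n) (d : ℕ) (hd : d ≤ K) :
    ((K : ℝ) / (Real.exp 1 * n)) ^ K ≤
      ((K : ℝ) / n) ^ d * (1 - (K : ℝ) / n) ^ (n - d) := by
  have hKltn : K < n := by omega
  have hn : 0 < n := by omega
  have hN : (0:ℝ) < n := by exact_mod_cast hn
  have hKr : (0:ℝ) < K := by exact_mod_cast hK
  have hKN : (K:ℝ) < n := by exact_mod_cast hKltn
  set p : ℝ := (K:ℝ) / n with hp_def
  have hp0 : 0 < p := div_pos hKr hN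
  have hphalf : p ≤ 1/2 := by
    rw [hp_def, div_le_div_iff₀ hN (by norm_num)]
    have : (2*K : ℝ) ≤ n := by exact_mod_cast hKn
    linarith
  have h1p0 : 0 < 1 - p := by linarith
  have hpp : p ≤ 1 - p := by linarith
  set m : ℕ := n - K with hm_def
  have hmr : (m:ℝ) = (n:ℝ) - K := by
    rw [hm_def]; push_cast [Nat.cast_sub hKltn.le]; ring
  have hm0 : (0:ℝ) < m := by rw [hmr]; linarith
  have hmn : (m:ℝ) + K = n := by rw [hmr]; ring
  -- key: exp(-(K/m)) ≤ 1 - p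
  have key : Real.exp (-((K:ℝ)/m)) ≤ 1 - p := by
    have h1 : 1 + (K:ℝ)/m ≤ Real.exp ((K:ℝ)/m) := by
      linarith [Real.add_one_le_exp ((K:ℝ)/m)]
    rw [Real.exp_neg]
    have hpos : (0:ℝ) < 1 + (K:ℝ)/m := by positivity
    refine (inv_anti₀ hpos h1).trans ?_
    have heq : (1 + (K:ℝ)/m)⁻¹ = 1 - p := by
      rw [hp_def]
      rw [show (1:ℝ) - (K:ℝ)/n = ((n:ℝ) - K)/n by rw [sub_div, div_self hN.ne']]
      rw [← hmr, ← hmn]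
      field_simp
    rw [heq]
  -- exp(-K) ≤ (1-p)^m
  have hexpK : Real.exp (-(K:ℝ)) ≤ (1 - p) ^ m := by
    have h1 : Real.exp (-(K:ℝ)) = (Real.exp (-((K:ℝ)/m))) ^ m := by
      rw [← Real.exp_nat_mul]
      congr 1
      field_simp
    rw [h1]
    exact pow_le_pow_left₀ (Real.exp_pos _).le key m
  -- step B: (K/(e n))^K ≤ p^K * (1-p)^m
  have stepB : ((K : ℝ) / (Real.exp 1 * n)) ^ K ≤ p ^ K * (1 - p) ^ m := by
    have heq : ((K : ℝ) / (Real.exp 1 * n)) ^ K = p ^ K * (Real.exp (-1)) ^ K := by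
      rw [← mul_pow]
      congr 1
      rw [hp_def, Real.exp_neg]
      field_simp
    rw [heq]
    have : (Real.exp (-1:ℝ)) ^ K = Real.exp (-(K:ℝ)) := by
      rw [← Real.exp_nat_mul]; congr 1; ring
    rw [this]
    exact mul_le_mul_of_nonneg_left hexpK (pow_nonneg hp0.le K)
  -- step A: p^K * (1-p)^m ≤ p^d * (1-p)^(n-d)
  have stepA : p ^ K * (1 - p) ^ m ≤ p ^ d * (1 - p) ^ (n - d) := by
    have hsplit1 : p ^ K = p ^ d * p ^ (K - d) := by
      rw [← pow_add]; congr 1; omega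
    have hsplit2 : (1 - p) ^ (n - d) = (1 - p) ^ (K - d) * (1 - p) ^ m := by
      rw [← pow_add]; congr 1; omega
    rw [hsplit1, hsplit2]
    have h3 : p ^ (K - d) ≤ (1 - p) ^ (K - d) := pow_le_pow_left₀ hp0.le hpp _
    calc p ^ d * p ^ (K - d) * (1 - p) ^ m
        ≤ p ^ d * (1 - p) ^ (K - d) * (1 - p) ^ m := by
          apply mul_le_mul_of_nonneg_right _ (pow_nonneg h1p0.le m)
          exact mul_le_mul_of_nonneg_left h3 (pow_nonneg hp0.le d)
      _ = p ^ d * ((1 - p) ^ (K - d) * (1 - p) ^ m) := by ring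
  exact stepB.trans stepA

/-- Proposition 3: if `1 ≤ K ≤ n/2` and `p_m = K/n`, then bitwise mutation
transforms `y` into any fixed `x` at Hamming distance at most `K` with
probability `p_m^{d(x,y)}·(1-p_m)^{n-d(x,y)} ≥ (K/(e·n))^K`; equivalently,
`(K/n)^d·(1-K/n)^{n-d} ≥ (K/(e·n))^K` for every `0 ≤ d ≤ K`. -/
theorem stmt_9 (n K : ℕ) (hK : 1 ≤ K) (hKn : 2 * K ≤ n)
    (x y : Fin n → Bool) (hd : hammingDist x y ≤ K) :
    ((K : ℝ) / (Real.exp 1 * n)) ^ K ≤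
        ((K : ℝ) / n) ^ hammingDist x y *
          (1 - (K : ℝ) / n) ^ (n - hammingDist x y) ∧
      ∀ d : ℕ, d ≤ K →
        ((K : ℝ) / (Real.exp 1 * n)) ^ K ≤
          ((K : ℝ) / n) ^ d * (1 - (K : ℝ) / n) ^ (n - d) := by
  exact ⟨stmt_9_aux n K hK hKn _ hd, fun d hd' => stmt_9_aux n K hK hKn d hd'⟩
end
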